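/- (Commutative case of Theorem 3.8, key implication.) Let (Ω,Σ,μ) be a σ-finite measure space and let a_n : L^∞(Ω,μ;ℂ) → L⁰(Ω,μ;ℂ) be a sequence of additive maps which is uniformly equicontinuous at 0 on the unit ball { x ∈ L^∞ : ‖x‖_∞ ≤ 1 }. Suppose D is a subset of the unit ball, dense in the unit ball with respect to the measure topology (every x in the unit ball is the measure-topology limit of a sequence from D), such that (a_n(x))_n converges almost uniformly for every x ∈ D. Then (a_n(x))_n converges almost uniformly for every x in the unit ball. -/

import Mathlib

open MeasureTheory Filter Topology
open scoped ENNReal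

/-- `gs k → g` in the measure topology. -/
def TendstoMeasTop {Ω : Type*} [MeasurableSpace Ω] (μ : Measure Ω)
    (gs : ℕ → Ω → ℂ) (g : Ω → ℂ) : Prop :=
  ∀ ε δ : ℝ, 0 < ε → 0 < δ → ∃ K : ℕ, ∀ k ≥ K, ∃ E : Set Ω, MeasurableSet E ∧
    μ Eᶜ ≤ ENNReal.ofReal ε ∧ ∀ᵐ ω ∂μ.restrict E, ‖gs k ω - g ω‖ ≤ δ

/-- `gs n → g` almost uniformly. -/
def ConvAU {Ω : Type*} [MeasurableSpace Ω] (μ : Measure Ω) (gs : ℕ → Ω → ℂ) (g : Ω → ℂ) :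
    Prop :=
  ∀ ε : ℝ, 0 < ε → ∃ E : Set Ω, MeasurableSet E ∧ μ Eᶜ ≤ ENNReal.ofReal ε ∧
    Filter.Tendsto (fun n => essSup (fun ω => (‖gs n ω - g ω‖₊ : ℝ≥0∞)) (μ.restrict E))
      Filter.atTop (nhds 0)

/-- Uniform equicontinuity at `0` on `E ⊆ L^∞` of the maps `a_n : L^∞ → L⁰`. -/
def UnifEquicont {Ω : Type*} [MeasurableSpace Ω] (μ : Measure Ω)
    (a : ℕ → (Lp ℂ ⊤ μ) → (Ω →ₘ[μ] ℂ)) (E : Set (Lp ℂ ⊤ μ)) : Prop :=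
  ∀ ε δ : ℝ, 0 < ε → 0 < δ → ∃ γ : ℝ, 0 < γ ∧ ∀ x ∈ E,
    (∃ F : Set Ω, MeasurableSet F ∧ μ Fᶜ ≤ ENNReal.ofReal γ ∧
      ∀ᵐ ω ∂μ.restrict F, ‖(x : Ω → ℂ) ω‖ ≤ γ) →
    ∃ G : Set Ω, MeasurableSet G ∧ μ Gᶜ ≤ ENNReal.ofReal ε ∧
      ∀ n, essSup (fun ω => (‖(a n x : Ω → ℂ) ω‖₊ : ℝ≥0∞)) (μ.restrict G) ≤
        ENNReal.ofReal δ

private lemma tri3 (u v w t : ℂ) :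
    (‖u - t‖₊ : ℝ≥0∞) ≤ (‖u - v‖₊ : ℝ≥0∞) + ‖v - w‖₊ + ‖w - t‖₊ := by
  have h := dist_triangle4 u v w t
  simp only [dist_eq_norm] at h
  rw [← (show ∀ z : ℂ, ENNReal.ofReal ‖z‖ = (‖z‖₊ : ℝ≥0∞) from fun z => ofReal_norm z), ← (show ∀ z : ℂ, ENNReal.ofReal ‖z‖ = (‖z‖₊ : ℝ≥0∞) from fun z => ofReal_norm z),
    ← (show ∀ z : ℂ, ENNReal.ofReal ‖z‖ = (‖z‖₊ : ℝ≥0∞) from fun z => ofReal_norm z), ← (show ∀ z : ℂ, ENNReal.ofReal ‖z‖ = (‖z‖₊ : ℝ≥0∞) from fun z => ofReal_norm z),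
    ← ENNReal.ofReal_add (norm_nonneg _) (norm_nonneg _),
    ← ENNReal.ofReal_add (by positivity) (norm_nonneg _)]
  exact ENNReal.ofReal_le_ofReal h

private lemma tri4 (u v w s t : ℂ) :
    (‖u - t‖₊ : ℝ≥0∞) ≤ (‖u - v‖₊ : ℝ≥0∞) + ‖v - w‖₊ + ‖w - s‖₊ + ‖s - t‖₊ := by
  calc (‖u - t‖₊ : ℝ≥0∞) ≤ (‖u - v‖₊ : ℝ≥0∞) + ‖v - s‖₊ + ‖s - t‖₊ := tri3 u v s t
  _ ≤ (‖u - v‖₊ : ℝ≥0∞) + ((‖v - w‖₊ : ℝ≥0∞) + ‖w - s‖₊) + ‖s - t‖₊ := by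
      gcongr
      have h := dist_triangle v w s
      simp only [dist_eq_norm] at h
      rw [← (show ∀ z : ℂ, ENNReal.ofReal ‖z‖ = (‖z‖₊ : ℝ≥0∞) from fun z => ofReal_norm z), ← (show ∀ z : ℂ, ENNReal.ofReal ‖z‖ = (‖z‖₊ : ℝ≥0∞) from fun z => ofReal_norm z),
        ← (show ∀ z : ℂ, ENNReal.ofReal ‖z‖ = (‖z‖₊ : ℝ≥0∞) from fun z => ofReal_norm z), ← ENNReal.ofReal_add (norm_nonneg _) (norm_nonneg _)]
      exact ENNReal.ofReal_le_ofReal h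
  _ = (‖u - v‖₊ : ℝ≥0∞) + ‖v - w‖₊ + ‖w - s‖₊ + ‖s - t‖₊ := by ring

/-- Theorem 3.8 (commutative, key implication): if a sequence of additive maps
`a_n : L^∞ → L⁰` is uniformly equicontinuous at `0` on the unit ball, and `(a_n(x))_n`
converges almost uniformly for every `x` in a subset `D` of the unit ball which is dense
in the unit ball for the measure topology, then `(a_n(x))_n` converges almost uniformly
for every `x` in the unit ball. -/
theorem stmt_18 {Ω : Type*} [MeasurableSpace Ω] (μ : Measure Ω) [SigmaFinite μ]
    (a : ℕ → (Lp ℂ ⊤ μ) → (Ω →ₘ[μ] ℂ))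
    (ha_add : ∀ n (x y : Lp ℂ ⊤ μ), a n (x + y) = a n x + a n y)
    (h : UnifEquicont μ a {x : Lp ℂ ⊤ μ | ‖x‖ ≤ 1})
    (D : Set (Lp ℂ ⊤ μ)) (hD_ball : D ⊆ {x : Lp ℂ ⊤ μ | ‖x‖ ≤ 1})
    (hD_dense : ∀ x : Lp ℂ ⊤ μ, ‖x‖ ≤ 1 → ∃ ys : ℕ → Lp ℂ ⊤ μ, (∀ k, ys k ∈ D) ∧
      TendstoMeasTop μ (fun k ω => (ys k : Ω → ℂ) ω) (fun ω => (x : Ω → ℂ) ω))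
    (hD_conv : ∀ y ∈ D, ∃ g : Ω → ℂ, Measurable g ∧
      ConvAU μ (fun n ω => (a n y : Ω → ℂ) ω) g) :
    ∀ x : Lp ℂ ⊤ μ, ‖x‖ ≤ 1 → ∃ g : Ω → ℂ, Measurable g ∧
      ConvAU μ (fun n ω => (a n x : Ω → ℂ) ω) g := by
  classical
  intro x hx
  obtain ⟨ys, hysD, hys⟩ := hD_dense x hx
  -- the basic scale sequence
  set r : ℕ → ℝ := fun j => (2⁻¹ : ℝ) ^ j with hr_def
  have hrpos : ∀ j, 0 < r j := fun j => by positivity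
  have hrtend : Tendsto r atTop (𝓝 0) :=
    tendsto_pow_atTop_nhds_zero_of_lt_one (by norm_num) (by norm_num)
  have hranti : ∀ {i j : ℕ}, i ≤ j → r j ≤ r i :=
    fun {i j} hij => pow_le_pow_of_le_one (by norm_num) (by norm_num) hij
  have hofR : ∀ c : ℝ, Tendsto (fun k => ENNReal.ofReal (c * r k)) atTop (𝓝 0) := by
    intro c
    have h1 : Tendsto (fun k => c * r k) atTop (𝓝 (c * 0)) := hrtend.const_mul c
    rw [mul_zero] at h1
    have h2 := ENNReal.tendsto_ofReal h1
    simpa using h2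
  -- equicontinuity data at scale r j
  choose γ hγpos hγ using fun j : ℕ => h (r j) (r j) (hrpos j) (hrpos j)
  -- density: choose indices k with x - ys k small
  choose K hK using fun j : ℕ => hys (γ j) (γ j) (hγpos j) (hγpos j)
  set y : ℕ → Lp ℂ ⊤ μ := fun j => ys (K j) with hy_def
  set z : ℕ → Lp ℂ ⊤ μ := fun j => (2⁻¹ : ℂ) • (x - y j) with hz_def
  have hhalf : ‖(2⁻¹ : ℂ)‖ = 2⁻¹ := by
    rw [norm_inv]
    simp
  have hz_ball : ∀ j, z j ∈ {x : Lp ℂ ⊤ μ | ‖x‖ ≤ 1} := by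
    intro j
    have hyball : ‖y j‖ ≤ 1 := hD_ball (hysD (K j))
    have : ‖z j‖ ≤ 1 := by
      calc ‖z j‖ = 2⁻¹ * ‖x - y j‖ := by rw [hz_def, norm_smul, hhalf]
      _ ≤ 2⁻¹ * (‖x‖ + ‖y j‖) := by gcongr; exact norm_sub_le _ _
      _ ≤ 2⁻¹ * (1 + 1) := by gcongr
      _ = 1 := by norm_num
    exact this
  have hz_coe : ∀ j, (z j : Ω → ℂ) =ᵐ[μ]
      fun ω => (2⁻¹ : ℂ) * ((x : Ω → ℂ) ω - (y j : Ω → ℂ) ω) := by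
    intro j
    have h1 := Lp.coeFn_smul (2⁻¹ : ℂ) (x - y j) (μ := μ) (p := ⊤)
    have h2 := Lp.coeFn_sub (μ := μ) (p := ⊤) x (y j)
    rw [hz_def]
    filter_upwards [h1, h2] with ω hω1 hω2
    simp only [hω1, Pi.smul_apply, hω2, Pi.sub_apply, smul_eq_mul]
  have hzF : ∀ j, ∃ F : Set Ω, MeasurableSet F ∧ μ Fᶜ ≤ ENNReal.ofReal (γ j) ∧
      ∀ᵐ ω ∂μ.restrict F, ‖(z j : Ω → ℂ) ω‖ ≤ γ j := by
    intro j
    obtain ⟨F, hFm, hFμ, hF⟩ := hK j (K j) le_rfl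
    refine ⟨F, hFm, hFμ, ?_⟩
    filter_upwards [ae_restrict_of_ae (hz_coe j), hF] with ω hω1 hω2
    rw [hω1, norm_mul, hhalf]
    rw [norm_sub_rev]
    calc 2⁻¹ * ‖(y j : Ω → ℂ) ω - (x : Ω → ℂ) ω‖ ≤ 2⁻¹ * γ j := by gcongr
    _ ≤ γ j := by linarith [hγpos j]
  choose G hGm hGμ hGbd using fun j => hγ j (z j) (hz_ball j) (hzF j)
  -- a.u. limits on D
  choose g' hg'meas hg'conv using fun j => hD_conv (y j) (hysD (K j))
  choose E' hE'm hE'μ hE'tend using fun j => hg'conv j (r j) (hrpos j)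
  set tseq : ℕ → ℕ → ℝ≥0∞ := fun j n =>
    essSup (fun ω => (‖(a n (y j) : Ω → ℂ) ω - g' j ω‖₊ : ℝ≥0∞)) (μ.restrict (E' j))
    with htseq_def
  have hE'tend' : ∀ j, Tendsto (fun n => tseq j n) atTop (𝓝 0) := fun j => hE'tend j
  -- additivity decomposition
  have hxdecomp : ∀ j, x = y j + (z j + z j) := by
    intro j
    rw [hz_def, ← add_smul]
    norm_num
  have hadd : ∀ j n, (fun ω => (a n x : Ω → ℂ) ω) =ᵐ[μ]
      fun ω => (a n (y j) : Ω → ℂ) ω +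
        ((a n (z j) : Ω → ℂ) ω + (a n (z j) : Ω → ℂ) ω) := by
    intro j n
    have hEq : a n x = a n (y j) + (a n (z j) + a n (z j)) := by
      conv_lhs => rw [hxdecomp j]
      rw [ha_add, ha_add]
    rw [hEq]
    filter_upwards [AEEqFun.coeFn_add (a n (y j)) (a n (z j) + a n (z j)),
      AEEqFun.coeFn_add (a n (z j)) (a n (z j))] with ω hω1 hω2
    simp only [hω1, Pi.add_apply, hω2]
  -- (P1): on G j, a_n x is close to a_n (y j)
  have hP1 : ∀ j n, ∀ᵐ ω ∂μ, ω ∈ G j →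
      (‖(a n x : Ω → ℂ) ω - (a n (y j) : Ω → ℂ) ω‖₊ : ℝ≥0∞) ≤ ENNReal.ofReal (2 * r j) := by
    intro j n
    rw [← ae_restrict_iff' (hGm j)]
    have h1 := ENNReal.ae_le_essSup (μ := μ.restrict (G j))
      (fun ω => (‖(a n (z j) : Ω → ℂ) ω‖₊ : ℝ≥0∞))
    filter_upwards [h1, ae_restrict_of_ae (hadd j n)] with ω hω1 hω2
    have hb : (‖(a n (z j) : Ω → ℂ) ω‖₊ : ℝ≥0∞) ≤ ENNReal.ofReal (r j) :=
      hω1.trans (hGbd j n)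
    have heq : (a n x : Ω → ℂ) ω - (a n (y j) : Ω → ℂ) ω =
        (a n (z j) : Ω → ℂ) ω + (a n (z j) : Ω → ℂ) ω := by
      rw [hω2]; ring
    rw [heq]
    calc (‖(a n (z j) : Ω → ℂ) ω + (a n (z j) : Ω → ℂ) ω‖₊ : ℝ≥0∞)
        ≤ (‖(a n (z j) : Ω → ℂ) ω‖₊ : ℝ≥0∞) + ‖(a n (z j) : Ω → ℂ) ω‖₊ := by
          exact_mod_cast nnnorm_add_le _ _
    _ ≤ ENNReal.ofReal (r j) + ENNReal.ofReal (r j) := add_le_add hb hb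
    _ = ENNReal.ofReal (2 * r j) := by
        rw [← ENNReal.ofReal_add (hrpos j).le (hrpos j).le]; ring_nf
  -- (P2): on E' j, a_n (y j) is close to g' j
  have hP2 : ∀ j n, ∀ᵐ ω ∂μ, ω ∈ E' j →
      (‖(a n (y j) : Ω → ℂ) ω - g' j ω‖₊ : ℝ≥0∞) ≤ tseq j n := by
    intro j n
    rw [← ae_restrict_iff' (hE'm j)]
    exact ENNReal.ae_le_essSup _
  -- combined a.e. statement
  have hP12 : ∀ᵐ ω ∂μ, ∀ j n, (ω ∈ G j →
      (‖(a n x : Ω → ℂ) ω - (a n (y j) : Ω → ℂ) ω‖₊ : ℝ≥0∞) ≤ ENNReal.ofReal (2 * r j)) ∧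
      (ω ∈ E' j → (‖(a n (y j) : Ω → ℂ) ω - g' j ω‖₊ : ℝ≥0∞) ≤ tseq j n) := by
    rw [ae_all_iff]
    intro j
    rw [ae_all_iff]
    intro n
    filter_upwards [hP1 j n, hP2 j n] with ω h1 h2
    exact ⟨h1, h2⟩
  -- (P3): pairwise closeness of the limits g'
  have hP3 : ∀ᵐ ω ∂μ, ∀ i j, ω ∈ G i ∩ E' i → ω ∈ G j ∩ E' j →
      (‖g' i ω - g' j ω‖₊ : ℝ≥0∞) ≤ ENNReal.ofReal (2 * r i) + ENNReal.ofReal (2 * r j) := by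
    filter_upwards [hP12] with ω hω
    intro i j hi hj
    have htend : Tendsto (fun n => (ENNReal.ofReal (2 * r i) + ENNReal.ofReal (2 * r j))
        + (tseq i n + tseq j n)) atTop
        (𝓝 ((ENNReal.ofReal (2 * r i) + ENNReal.ofReal (2 * r j)) + (0 + 0))) :=
      tendsto_const_nhds.add ((hE'tend' i).add (hE'tend' j))
    rw [add_zero, add_zero] at htend
    refine ge_of_tendsto htend (Eventually.of_forall fun n => ?_)
    have t1 := tri4 (g' i ω) ((a n (y i) : Ω → ℂ) ω) ((a n x : Ω → ℂ) ω)
      ((a n (y j) : Ω → ℂ) ω) (g' j ω)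
    have b1 : (‖g' i ω - (a n (y i) : Ω → ℂ) ω‖₊ : ℝ≥0∞) ≤ tseq i n := by
      rw [show g' i ω - (a n (y i) : Ω → ℂ) ω = -((a n (y i) : Ω → ℂ) ω - g' i ω) by ring,
        nnnorm_neg]
      exact ((hω i n).2 hi.2)
    have b2 : (‖(a n (y i) : Ω → ℂ) ω - (a n x : Ω → ℂ) ω‖₊ : ℝ≥0∞) ≤
        ENNReal.ofReal (2 * r i) := by
      rw [show (a n (y i) : Ω → ℂ) ω - (a n x : Ω → ℂ) ω =
        -((a n x : Ω → ℂ) ω - (a n (y i) : Ω → ℂ) ω) by ring, nnnorm_neg]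
      exact ((hω i n).1 hi.1)
    have b3 : (‖(a n x : Ω → ℂ) ω - (a n (y j) : Ω → ℂ) ω‖₊ : ℝ≥0∞) ≤
        ENNReal.ofReal (2 * r j) := (hω j n).1 hj.1
    have b4 : (‖(a n (y j) : Ω → ℂ) ω - g' j ω‖₊ : ℝ≥0∞) ≤ tseq j n := (hω j n).2 hj.2
    calc (‖g' i ω - g' j ω‖₊ : ℝ≥0∞) ≤ _ := t1
    _ ≤ tseq i n + ENNReal.ofReal (2 * r i) + ENNReal.ofReal (2 * r j) + tseq j n := by
        gcongr
    _ = (ENNReal.ofReal (2 * r i) + ENNReal.ofReal (2 * r j)) + (tseq i n + tseq j n) := by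
        ring
  -- the good sets
  set A : ℕ → Set Ω := fun j => G j ∩ E' j with hA_def
  have hAm : ∀ j, MeasurableSet (A j) := fun j => (hGm j).inter (hE'm j)
  have hrmul : ∀ J : ℕ, (fun j : ℕ => 2 * r (J + j)) =
      fun j : ℕ => (2 * r J) * (2⁻¹ : ℝ) ^ j := by
    intro J
    funext j
    simp only [hr_def, pow_add]
    ring
  have hAμ : ∀ J : ℕ, μ (⋂ j, A (J + j))ᶜ ≤ ENNReal.ofReal (4 * r J) := by
    intro J
    rw [Set.compl_iInter]
    have hsummable : Summable (fun j : ℕ => 2 * r (J + j)) := by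
      rw [hrmul J]
      exact (summable_geometric_of_lt_one (by norm_num) (by norm_num)).mul_left _
    calc μ (⋃ j, (A (J + j))ᶜ) ≤ ∑' j : ℕ, μ (A (J + j))ᶜ := measure_iUnion_le _
    _ ≤ ∑' j : ℕ, ENNReal.ofReal (2 * r (J + j)) := by
        refine ENNReal.tsum_le_tsum fun j => ?_
        rw [hA_def]
        simp only [Set.compl_inter]
        calc μ ((G (J + j))ᶜ ∪ (E' (J + j))ᶜ) ≤ μ (G (J + j))ᶜ + μ (E' (J + j))ᶜ :=
              measure_union_le _ _
        _ ≤ ENNReal.ofReal (r (J + j)) + ENNReal.ofReal (r (J + j)) :=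
              add_le_add (hGμ _) (hE'μ _)
        _ = ENNReal.ofReal (2 * r (J + j)) := by
              rw [← ENNReal.ofReal_add (hrpos _).le (hrpos _).le]; ring_nf
    _ = ENNReal.ofReal (∑' j : ℕ, 2 * r (J + j)) :=
        (ENNReal.ofReal_tsum_of_nonneg (fun j => by positivity) hsummable).symm
    _ = ENNReal.ofReal (4 * r J) := by
        congr 1
        rw [hrmul J, tsum_mul_left, tsum_geometric_of_lt_one (by norm_num) (by norm_num)]
        norm_num
        ring
  -- a.e. existence of the limit of g' j
  have hS : μ (⋃ J : ℕ, ⋂ j : ℕ, A (J + j))ᶜ = 0 := by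
    rw [Set.compl_iUnion]
    refine le_antisymm ?_ zero_le
    exact ge_of_tendsto' (hofR 4) fun J =>
      le_trans (measure_mono (Set.iInter_subset _ J)) (hAμ J)
  have hae_ex : ∀ᵐ ω ∂μ, ∃ l : ℂ, Tendsto (fun j => g' j ω) atTop (𝓝 l) := by
    have hSmem : ∀ᵐ ω ∂μ, ω ∈ ⋃ J : ℕ, ⋂ j : ℕ, A (J + j) := by
      rw [ae_iff]
      convert hS using 2
      rfl
    filter_upwards [hP3, hSmem] with ω hω3 hωS
    obtain ⟨J, hJ⟩ := Set.mem_iUnion.1 hωS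
    have hmem : ∀ k, J ≤ k → ω ∈ A k := by
      intro k hk
      have := Set.mem_iInter.1 hJ (k - J)
      rwa [Nat.add_sub_cancel' hk] at this
    have hcauchy : CauchySeq (fun j => g' j ω) := by
      rw [Metric.cauchySeq_iff']
      intro ε hε
      obtain ⟨M, hM1, hM2⟩ := ((hrtend.eventually_lt_const
        (show (0:ℝ) < ε / 4 by linarith)).and (eventually_ge_atTop J)).exists
      refine ⟨M, fun n hn => ?_⟩
      have hJn : J ≤ n := hM2.trans hn
      have hb := hω3 n M (hmem n hJn) (hmem M hM2)
      have hb2 : (‖g' n ω - g' M ω‖₊ : ℝ≥0∞) ≤ ENNReal.ofReal (2 * r n + 2 * r M) := by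
        rwa [ENNReal.ofReal_add (by positivity) (by positivity)]
      rw [← (show ∀ z : ℂ, ENNReal.ofReal ‖z‖ = (‖z‖₊ : ℝ≥0∞) from fun z => ofReal_norm z)] at hb2
      have hb3 : ‖g' n ω - g' M ω‖ ≤ 2 * r n + 2 * r M :=
        (ENNReal.ofReal_le_ofReal_iff (by positivity)).1 hb2
      have hrn : r n ≤ r M := hranti hn
      rw [dist_eq_norm]
      calc ‖g' n ω - g' M ω‖ ≤ 2 * r n + 2 * r M := hb3
      _ ≤ 4 * r M := by linarith
      _ < 4 * (ε / 4) := by linarith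
      _ = ε := by ring
    exact cauchySeq_tendsto_of_complete hcauchy
  obtain ⟨g, hgmeas, hgtend⟩ := measurable_limit_of_tendsto_metrizable_ae
    (fun j => (hg'meas j).aemeasurable) hae_ex
  refine ⟨g, hgmeas, ?_⟩
  -- now prove the a.u. convergence of a n x to g
  intro ε hε
  obtain ⟨J, hJ⟩ := (hrtend.eventually_lt_const (show (0:ℝ) < ε / 4 by linarith)).exists
  refine ⟨⋂ j, A (J + j), MeasurableSet.iInter fun j => hAm _,
    le_trans (hAμ J) (ENNReal.ofReal_le_ofReal (by linarith)), ?_⟩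
  rw [ENNReal.tendsto_atTop_zero]
  intro η hη
  have hη2 : 0 < η / 2 := ENNReal.half_pos hη.ne'
  obtain ⟨M, hM⟩ := ENNReal.tendsto_atTop_zero.1 (hofR 4) (η / 2) hη2
  set j₀ : ℕ := J + M with hj0_def
  have hj₀bd : ENNReal.ofReal (4 * r j₀) ≤ η / 2 := hM j₀ (Nat.le_add_left M J)
  obtain ⟨N, hN⟩ := ENNReal.tendsto_atTop_zero.1 (hE'tend j₀) (η / 2) hη2
  refine ⟨N, fun n hn => ?_⟩
  refine essSup_le_of_ae_le _ ?_
  have hgoal : ∀ᵐ ω ∂μ, ω ∈ (⋂ j, A (J + j)) →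
      (‖(a n x : Ω → ℂ) ω - g ω‖₊ : ℝ≥0∞) ≤ η := by
    filter_upwards [hP12, hP3, hgtend] with ω hω12 hω3 hωg
    intro hωE
    have hmem : ∀ i, ω ∈ A (J + i) := fun i => Set.mem_iInter.1 hωE i
    have hωj₀ : ω ∈ A j₀ := hmem M
    -- bound ‖g' j₀ ω - g ω‖
    have hgb : (‖g' j₀ ω - g ω‖₊ : ℝ≥0∞) ≤ ENNReal.ofReal (2 * r j₀) := by
      have hcomp : (fun i : ℕ => g' (J + i) ω) = (fun j => g' j ω) ∘ fun i : ℕ => i + J := by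
        funext i
        simp [Nat.add_comm]
      have hsub : Tendsto (fun i : ℕ => g' (J + i) ω) atTop (𝓝 (g ω)) := by
        rw [hcomp]
        exact hωg.comp (tendsto_add_atTop_nat J)
      have hL : Tendsto (fun i => (‖g' j₀ ω - g' (J + i) ω‖₊ : ℝ≥0∞)) atTop
          (𝓝 (‖g' j₀ ω - g ω‖₊ : ℝ≥0∞)) := by
        have h1 : Tendsto (fun i => g' j₀ ω - g' (J + i) ω) atTop (𝓝 (g' j₀ ω - g ω)) :=
          tendsto_const_nhds.sub hsub
        exact ENNReal.tendsto_coe.2 h1.nnnorm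
      have hR0 : Tendsto (fun i : ℕ => ENNReal.ofReal (2 * r (J + i))) atTop (𝓝 0) := by
        have hcomp2 : (fun i : ℕ => ENNReal.ofReal (2 * r (J + i))) =
            (fun k => ENNReal.ofReal (2 * r k)) ∘ fun i : ℕ => i + J := by
          funext i
          simp [Nat.add_comm]
        rw [hcomp2]
        exact (hofR 2).comp (tendsto_add_atTop_nat J)
      have hR : Tendsto (fun i : ℕ => ENNReal.ofReal (2 * r j₀) +
          ENNReal.ofReal (2 * r (J + i))) atTop (𝓝 (ENNReal.ofReal (2 * r j₀) + 0)) :=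
        tendsto_const_nhds.add hR0
      rw [add_zero] at hR
      exact le_of_tendsto_of_tendsto' hL hR fun i => hω3 j₀ (J + i) hωj₀ (hmem i)
    calc (‖(a n x : Ω → ℂ) ω - g ω‖₊ : ℝ≥0∞)
        ≤ (‖(a n x : Ω → ℂ) ω - (a n (y j₀) : Ω → ℂ) ω‖₊ : ℝ≥0∞) +
          ‖(a n (y j₀) : Ω → ℂ) ω - g' j₀ ω‖₊ + ‖g' j₀ ω - g ω‖₊ :=
        tri3 _ _ _ _
    _ ≤ ENNReal.ofReal (2 * r j₀) + tseq j₀ n + ENNReal.ofReal (2 * r j₀) := by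
        gcongr
        · exact (hω12 j₀ n).1 hωj₀.1
        · exact (hω12 j₀ n).2 hωj₀.2
    _ = ENNReal.ofReal (4 * r j₀) + tseq j₀ n := by
        rw [show (4 : ℝ) * r j₀ = 2 * r j₀ + 2 * r j₀ by ring,
          ENNReal.ofReal_add (by positivity) (by positivity)]
        ring
    _ ≤ η / 2 + η / 2 := add_le_add hj₀bd (hN n hn)
    _ = η := ENNReal.add_halves η
  exact (ae_restrict_iff' (MeasurableSet.iInter fun j => hAm _)).2 hgoal
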